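/- For every k ∈ [n] and every signaling scheme Z, the consumer surplus accumulated on the k smallest values satisfies Σ_{i=1}^k f_𝒟(vᵢ)·cs_{vᵢ}(Z) ≤ V_k − max_{i∈[k]} ( vᵢ · Σ_{j=i}^k f_𝒟(vⱼ) ), where V_k = Σ_{i=1}^k vᵢ·f_𝒟(vᵢ). -/

import Mathlib

open Finset MeasureTheory

namespace PD

noncomputable section

/-- Complementary CDF of a mass function `fS` at value `v i`. -/
def G {n : ℕ} (v fS : Fin n → ℝ) (i : Fin n) : ℝ :=
  ∑ j ∈ Finset.univ.filter (fun j => v i ≤ v j), fS j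

/-- A signal is a probability mass function on the values. -/
def IsSignal {n : ℕ} (fS : Fin n → ℝ) : Prop :=
  (∀ i, 0 ≤ fS i) ∧ ∑ i, fS i = 1

/-- The index of the seller's price: the smallest index maximizing `v i * G i`. -/
def priceIdx {n : ℕ} [NeZero n] (v fS : Fin n → ℝ) : Fin n :=
  (Finset.univ.filter (fun i => ∀ j, v j * G v fS j ≤ v i * G v fS i)).min' (by
    haveI : Nonempty (Fin n) := ⟨⟨0, Nat.pos_of_ne_zero (NeZero.ne n)⟩⟩
    obtain ⟨b, _, hb⟩ := Finset.exists_max_image (Finset.univ : Finset (Fin n))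
      (fun i => v i * G v fS i) Finset.univ_nonempty
    exact ⟨b, Finset.mem_filter.mpr ⟨Finset.mem_univ _, fun j => hb j (Finset.mem_univ _)⟩⟩)

/-- Consumer surplus of value `v i` under signal `fS`. -/
def cs {n : ℕ} [NeZero n] (v fS : Fin n → ℝ) (i : Fin n) : ℝ :=
  if v (priceIdx v fS) ≤ v i then v i - v (priceIdx v fS) else 0

/-- Revenue of a signal: the maximum of `v i * G i`. -/
def revSig {n : ℕ} [NeZero n] (v fS : Fin n → ℝ) : ℝ :=
  Finset.univ.sup' (by
    haveI : Nonempty (Fin n) := ⟨⟨0, Nat.pos_of_ne_zero (NeZero.ne n)⟩⟩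
    exact Finset.univ_nonempty) (fun i => v i * G v fS i)

/-- A signaling scheme for prior mass function `f`. -/
structure Scheme (n : ℕ) (f : Fin n → ℝ) where
  Q : ℕ
  sig : Fin Q → Fin n → ℝ
  wt : Fin Q → ℝ
  sig_isSignal : ∀ q, IsSignal (sig q)
  wt_nonneg : ∀ q, 0 ≤ wt q
  wt_sum : ∑ q, wt q = 1
  bayes : ∀ i, ∑ q, wt q * sig q i = f i

/-- Expected consumer surplus of value `v i` under scheme `Z`. -/
def csZ {n : ℕ} [NeZero n] (v f : Fin n → ℝ) (Z : Scheme n f) (i : Fin n) : ℝ :=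
  ∑ q, cs v (Z.sig q) i * (Z.wt q * Z.sig q i / f i)

/-- Expected revenue of a scheme. -/
def revZ {n : ℕ} [NeZero n] (v : Fin n → ℝ) {f : Fin n → ℝ} (Z : Scheme n f) : ℝ :=
  ∑ q, Z.wt q * revSig v (Z.sig q)

/-- A scheme is efficient if on every positive-weight signal, the smallest value
in the support maximizes `v * G`. -/
def Efficient {n : ℕ} (v : Fin n → ℝ) {f : Fin n → ℝ} (Z : Scheme n f) : Prop :=
  ∀ q, 0 < Z.wt q → ∀ i, (0 < Z.sig q i ∧ ∀ j, 0 < Z.sig q j → i ≤ j) →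
    ∀ j, v j * G v (Z.sig q) j ≤ v i * G v (Z.sig q) i

/-- A scheme is monotone if higher values get (weakly) higher expected surplus. -/
def MonotoneScheme {n : ℕ} [NeZero n] (v f : Fin n → ℝ) (Z : Scheme n f) : Prop :=
  ∀ i j : Fin n, v i < v j → csZ v f Z i ≤ csZ v f Z j

/-- A scheme is buyer-optimal if the total expected consumer surplus equals the
expected value minus the Myerson revenue. -/
def BuyerOptimal {n : ℕ} [NeZero n] (v f : Fin n → ℝ) (Z : Scheme n f) : Prop :=
  ∑ i, f i * csZ v f Z i = (∑ i, f i * v i) - revSig v f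

/-- The surplus-mass step function of a scheme: equal to `csZ i` on the quantile
interval `(F(v_{i-1}), F(v_i)]`. -/
def smf {n : ℕ} [NeZero n] (v f : Fin n → ℝ) (Z : Scheme n f) (x : ℝ) : ℝ :=
  ∑ i, if (∑ j ∈ Finset.univ.filter (fun j => j < i), f j) < x ∧
          x ≤ ∑ j ∈ Finset.univ.filter (fun j => j ≤ i), f j
       then csZ v f Z i else 0

/-- Sorted `m`-prefix sum of `g` on `(0,1]`: the infimum of `∫_T g` over
(measurable) subsets `T` of `(0,1]` of total length `m`. -/
def PF (g : ℝ → ℝ) (m : ℝ) : ℝ :=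
  sInf { r : ℝ | ∃ T : Set ℝ, T ⊆ Set.Ioc 0 1 ∧ MeasurableSet T ∧
    volume T = ENNReal.ofReal m ∧ r = ∫ x in T, g x }

/-- Integration `m`-prefix sum of `g`: `∫₀^m g`. -/
def PFV (g : ℝ → ℝ) (m : ℝ) : ℝ := ∫ x in Set.Ioc (0:ℝ) m, g x

/-- A singleton signal puts all mass on one value. -/
def IsSingleton {n : ℕ} (fS : Fin n → ℝ) : Prop :=
  ∃ i : Fin n, fS = fun j => if j = i then 1 else 0

/-- An equal-revenue binary signal on `v i < v j` puts mass `1 - v i / v j` on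
`v i` and `v i / v j` on `v j`. -/
def IsEqRevBinary {n : ℕ} (v : Fin n → ℝ) (fS : Fin n → ℝ) : Prop :=
  ∃ i j : Fin n, v i < v j ∧
    fS = fun l => if l = i then 1 - v i / v j else if l = j then v i / v j else 0

/-- `i` is the smallest value in the support of `fS`. -/
def MinSupp {n : ℕ} (fS : Fin n → ℝ) (i : Fin n) : Prop :=
  0 < fS i ∧ ∀ j, 0 < fS j → i ≤ j

end

lemma G_eq {n : ℕ} (v fS : Fin n → ℝ) (hv : StrictMono v) (i : Fin n) :
    G v fS i = ∑ j ∈ Finset.univ.filter (fun j => i ≤ j), fS j := by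
  unfold G
  congr 1
  apply Finset.filter_congr
  intro j _
  simp [hv.le_iff_le]

lemma split_le {n : ℕ} (fS : Fin n → ℝ) (i k : Fin n) (hik : i ≤ k) :
    ∑ j ∈ Finset.univ.filter (fun j => i ≤ j), fS j =
      (∑ j ∈ Finset.univ.filter (fun j => i ≤ j ∧ j ≤ k), fS j) +
        ∑ j ∈ Finset.univ.filter (fun j => k < j), fS j := by
  rw [← Finset.sum_filter_add_sum_filter_not
      (Finset.univ.filter (fun j => i ≤ j)) (fun j => j ≤ k)]
  congr 1
  · apply Finset.sum_congr _ (fun _ _ => rfl)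
    ext j
    simp only [Finset.mem_filter, Finset.mem_univ, true_and, Finset.filter_filter]
  · apply Finset.sum_congr _ (fun _ _ => rfl)
    ext j
    simp only [Finset.mem_filter, Finset.mem_univ, true_and, Finset.filter_filter, not_le]
    exact ⟨fun h => h.2, fun h => ⟨hik.trans h.le, h⟩⟩

lemma key {n : ℕ} [NeZero n] (v fS : Fin n → ℝ) (hv : StrictMono v)
    (hvpos : ∀ i, 0 < v i) (hS : ∀ i, 0 ≤ fS i) (k i0 : Fin n) (hik : i0 ≤ k) :
    ∑ i ∈ Finset.univ.filter (fun i => i ≤ k), fS i * cs v fS i ≤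
      (∑ i ∈ Finset.univ.filter (fun i => i ≤ k), v i * fS i) -
        v i0 * ∑ j ∈ Finset.univ.filter (fun j => i0 ≤ j ∧ j ≤ k), fS j := by
  set P := priceIdx v fS with hPdef
  have hPmem : P ∈ Finset.univ.filter
      (fun i => ∀ j, v j * G v fS j ≤ v i * G v fS i) := Finset.min'_mem _ _
  have hopt : ∀ j, v j * G v fS j ≤ v P * G v fS P := (Finset.mem_filter.mp hPmem).2
  have hcs : ∀ i, fS i * cs v fS i = v i * fS i - fS i * min (v i) (v P) := by
    intro i
    unfold cs
    rw [← hPdef]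
    split_ifs with h
    · rw [min_eq_right h]; ring
    · rw [min_eq_left (le_of_not_ge h)]; ring
  have hmain : v i0 * ∑ j ∈ Finset.univ.filter (fun j => i0 ≤ j ∧ j ≤ k), fS j ≤
      ∑ i ∈ Finset.univ.filter (fun i => i ≤ k), fS i * min (v i) (v P) := by
    by_cases hcase : v i0 ≤ v P
    · have hsub : Finset.univ.filter (fun j => i0 ≤ j ∧ j ≤ k) ⊆
          Finset.univ.filter (fun i => i ≤ k) := by
        intro j hj
        simp only [Finset.mem_filter, Finset.mem_univ, true_and] at hj ⊢
        exact hj.2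
      calc v i0 * ∑ j ∈ Finset.univ.filter (fun j => i0 ≤ j ∧ j ≤ k), fS j
          = ∑ j ∈ Finset.univ.filter (fun j => i0 ≤ j ∧ j ≤ k), fS j * v i0 := by
            rw [Finset.mul_sum]; exact Finset.sum_congr rfl (fun _ _ => by ring)
        _ ≤ ∑ j ∈ Finset.univ.filter (fun j => i0 ≤ j ∧ j ≤ k), fS j * min (v j) (v P) := by
            apply Finset.sum_le_sum
            intro j hj
            simp only [Finset.mem_filter, Finset.mem_univ, true_and] at hj
            exact mul_le_mul_of_nonneg_left (le_min (hv.monotone hj.1) hcase) (hS j)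
        _ ≤ ∑ i ∈ Finset.univ.filter (fun i => i ≤ k), fS i * min (v i) (v P) := by
            apply Finset.sum_le_sum_of_subset_of_nonneg hsub
            intro i _ _
            exact mul_nonneg (hS i) (le_of_lt (lt_min (hvpos i) (hvpos P)))
    · have hPi0 : v P < v i0 := lt_of_not_ge hcase
      have hPlt : P < i0 := hv.lt_iff_lt.mp hPi0
      have hPk : P ≤ k := le_trans hPlt.le hik
      set T := ∑ j ∈ Finset.univ.filter (fun j => k < j), fS j with hTdef
      set SP := ∑ j ∈ Finset.univ.filter (fun j => P ≤ j ∧ j ≤ k), fS j with hSPdef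
      set SI := ∑ j ∈ Finset.univ.filter (fun j => i0 ≤ j ∧ j ≤ k), fS j with hSIdef
      have hGP : G v fS P = SP + T := by
        rw [G_eq v fS hv P, split_le fS P k hPk]
      have hGI : G v fS i0 = SI + T := by
        rw [G_eq v fS hv i0, split_le fS i0 k hik]
      have hT : 0 ≤ T := Finset.sum_nonneg (fun j _ => hS j)
      have ho := hopt i0
      rw [hGP, hGI] at ho
      have hstep : v P * SP ≤
          ∑ i ∈ Finset.univ.filter (fun i => i ≤ k), fS i * min (v i) (v P) := by
        have hsub : Finset.univ.filter (fun j => P ≤ j ∧ j ≤ k) ⊆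
            Finset.univ.filter (fun i => i ≤ k) := by
          intro j hj
          simp only [Finset.mem_filter, Finset.mem_univ, true_and] at hj ⊢
          exact hj.2
        calc v P * SP = ∑ j ∈ Finset.univ.filter (fun j => P ≤ j ∧ j ≤ k),
              fS j * min (v j) (v P) := by
              rw [hSPdef, Finset.mul_sum]
              apply Finset.sum_congr rfl
              intro j hj
              simp only [Finset.mem_filter, Finset.mem_univ, true_and] at hj
              rw [min_eq_right (hv.monotone hj.1)]; ring
          _ ≤ _ := by
              apply Finset.sum_le_sum_of_subset_of_nonneg hsub
              intro i _ _
              exact mul_nonneg (hS i) (le_of_lt (lt_min (hvpos i) (hvpos P)))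
      have hprod : 0 ≤ (v i0 - v P) * T :=
        mul_nonneg (sub_nonneg.mpr hPi0.le) hT
      nlinarith [hstep, ho, hprod]
  calc ∑ i ∈ Finset.univ.filter (fun i => i ≤ k), fS i * cs v fS i
      = (∑ i ∈ Finset.univ.filter (fun i => i ≤ k), v i * fS i) -
          ∑ i ∈ Finset.univ.filter (fun i => i ≤ k), fS i * min (v i) (v P) := by
        rw [← Finset.sum_sub_distrib]
        exact Finset.sum_congr rfl (fun i _ => hcs i)
    _ ≤ _ := by linarith [hmain]

theorem stmt8 (n : ℕ) [NeZero n] (v f : Fin n → ℝ)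
    (hv : StrictMono v) (hvpos : ∀ i, 0 < v i)
    (hf : ∀ i, 0 < f i) (hsum : ∑ i, f i = 1)
    (k : Fin n) (Z : Scheme n f) :
    ∑ i ∈ Finset.univ.filter (fun i => i ≤ k), f i * csZ v f Z i ≤
      (∑ i ∈ Finset.univ.filter (fun i => i ≤ k), v i * f i) -
        (Finset.univ.filter (fun i => i ≤ k)).sup'
          ⟨k, by simp⟩
          (fun i => v i * ∑ j ∈ Finset.univ.filter (fun j => i ≤ j ∧ j ≤ k), f j) := by
  obtain ⟨i0, hi0mem, hi0⟩ := Finset.exists_mem_eq_sup'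
    (⟨k, by simp⟩ : (Finset.univ.filter (fun i => i ≤ k)).Nonempty)
    (fun i => v i * ∑ j ∈ Finset.univ.filter (fun j => i ≤ j ∧ j ≤ k), f j)
  rw [hi0]
  have hi0k : i0 ≤ k := (Finset.mem_filter.mp hi0mem).2
  have hrw : ∀ i ∈ Finset.univ.filter (fun i => i ≤ k),
      f i * csZ v f Z i = ∑ q, cs v (Z.sig q) i * (Z.wt q * Z.sig q i) := by
    intro i _
    unfold csZ
    rw [Finset.mul_sum]
    refine Finset.sum_congr rfl (fun q _ => ?_)
    field_simp
    rw [show f i * cs v (Z.sig q) i * Z.wt q * Z.sig q i = f i * (cs v (Z.sig q) i * Z.wt q * Z.sig q i) by ring]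
    exact mul_div_cancel_left₀ _ (hf i).ne'
  rw [Finset.sum_congr rfl hrw, Finset.sum_comm]
  have hq : ∀ q ∈ (Finset.univ : Finset (Fin Z.Q)),
      ∑ i ∈ Finset.univ.filter (fun i => i ≤ k), cs v (Z.sig q) i * (Z.wt q * Z.sig q i) ≤
      Z.wt q * ((∑ i ∈ Finset.univ.filter (fun i => i ≤ k), v i * Z.sig q i) -
        v i0 * ∑ j ∈ Finset.univ.filter (fun j => i0 ≤ j ∧ j ≤ k), Z.sig q j) := by
    intro q _
    have hk := key v (Z.sig q) hv hvpos (Z.sig_isSignal q).1 k i0 hi0k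
    have h2 := mul_le_mul_of_nonneg_left hk (Z.wt_nonneg q)
    calc ∑ i ∈ Finset.univ.filter (fun i => i ≤ k),
          cs v (Z.sig q) i * (Z.wt q * Z.sig q i)
        = Z.wt q * ∑ i ∈ Finset.univ.filter (fun i => i ≤ k),
            Z.sig q i * cs v (Z.sig q) i := by
          rw [Finset.mul_sum]; exact Finset.sum_congr rfl (fun _ _ => by ring)
      _ ≤ _ := h2
  refine le_trans (Finset.sum_le_sum hq) (le_of_eq ?_)
  have hA : ∑ q, Z.wt q * (∑ i ∈ Finset.univ.filter (fun i => i ≤ k), v i * Z.sig q i) =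
      ∑ i ∈ Finset.univ.filter (fun i => i ≤ k), v i * f i := by
    simp_rw [Finset.mul_sum]
    rw [Finset.sum_comm]
    refine Finset.sum_congr rfl (fun i _ => ?_)
    rw [← Z.bayes i, Finset.mul_sum]
    exact Finset.sum_congr rfl (fun q _ => by ring)
  have hB : ∑ q, Z.wt q * (v i0 * ∑ j ∈ Finset.univ.filter (fun j => i0 ≤ j ∧ j ≤ k), Z.sig q j) =
      v i0 * ∑ j ∈ Finset.univ.filter (fun j => i0 ≤ j ∧ j ≤ k), f j := by
    simp_rw [Finset.mul_sum]
    rw [Finset.sum_comm]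
    refine Finset.sum_congr rfl (fun j _ => ?_)
    rw [← Z.bayes j, Finset.mul_sum]
    exact Finset.sum_congr rfl (fun q _ => by ring)
  simp_rw [mul_sub]
  rw [Finset.sum_sub_distrib, hA, hB]

end PD
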